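/- A finite subset τ ⊆ ℤ×ℤ is a connected skew shape if and only if: (i) whenever u,v ∈ τ with u ↘ v, every S/E lattice path from u to v is contained in τ, and (ii) whenever u,v ∈ τ with u ↗ v, there exists an N/E lattice path from u to v contained in τ. -/

import Mathlib

open Finset

abbrev Node : Type := ℤ × ℤ

/-- `v` is weakly southeast of `u` (product order). -/
def SE (u v : Node) : Prop := u.1 ≤ v.1 ∧ u.2 ≤ v.2

/-- `v` is weakly northeast of `u` (`u ↗ v`). -/
def NEr (u v : Node) : Prop := v.1 ≤ u.1 ∧ u.2 ≤ v.2

/-- `v` is strictly northeast of `u` (`u ⇗ v`). -/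
def SNE (u v : Node) : Prop := v.1 < u.1 ∧ u.2 < v.2

def IsSkew (τ : Finset Node) : Prop :=
  ∀ u ∈ τ, ∀ w ∈ τ, ∀ v : Node, SE u v → SE v w → v ∈ τ

def Adj (u v : Node) : Prop :=
  v = u + (1, 0) ∨ v = u + (-1, 0) ∨ v = u + (0, 1) ∨ v = u + (0, -1)

def PathIn (τ : Finset Node) (u v : Node) : Prop :=
  Relation.ReflTransGen (fun a b => a ∈ τ ∧ b ∈ τ ∧ Adj a b) u v

def IsConnectedShape (τ : Finset Node) : Prop :=
  ∀ u ∈ τ, ∀ v ∈ τ, PathIn τ u v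

def Cornered (τ : Finset Node) : Prop :=
  (∀ u ∈ τ, ∀ u' ∈ τ, (u + (1, 0) ∉ τ ∧ u + (0, -1) ∉ τ) →
      (u' + (1, 0) ∉ τ ∧ u' + (0, -1) ∉ τ) → u = u') ∧
  (∀ v ∈ τ, ∀ v' ∈ τ, (v + (-1, 0) ∉ τ ∧ v + (0, 1) ∉ τ) →
      (v' + (-1, 0) ∉ τ ∧ v' + (0, 1) ∉ τ) → v = v')

def DiagConvex (τ : Finset Node) : Prop :=
  ∀ u ∈ τ, ∀ w ∈ τ, ∀ v : Node,
    u.2 - u.1 = v.2 - v.1 → v.2 - v.1 = w.2 - w.1 → SE u v → SE v w → v ∈ τ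

def Thin (τ : Finset Node) : Prop :=
  ∀ u ∈ τ, ∀ v ∈ τ, u.2 - u.1 = v.2 - v.1 → u = v

def IsRibbon (ξ : Finset Node) : Prop :=
  ξ.Nonempty ∧ IsSkew ξ ∧ IsConnectedShape ξ ∧ Thin ξ

def MaxSW (τ : Finset Node) (u : Node) : Prop :=
  u ∈ τ ∧ ∀ v ∈ τ, NEr v u → v = u

def MaxNE (τ : Finset Node) (v : Node) : Prop :=
  v ∈ τ ∧ ∀ w ∈ τ, NEr v w → w = v

def IsNEPath (z : ℕ → Node) (k : ℕ) : Prop :=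
  ∀ i, i + 1 < k → z (i + 1) = z i + (-1, 0) ∨ z (i + 1) = z i + (0, 1)

def IsSEPath (z : ℕ → Node) (k : ℕ) : Prop :=
  ∀ i, i + 1 < k → z (i + 1) = z i + (1, 0) ∨ z (i + 1) = z i + (0, 1)

def SERemovable (τ μ : Finset Node) : Prop :=
  μ ⊆ τ ∧ ∀ u ∈ μ, ∀ v ∈ τ \ μ, ¬ SE u v

section AuxLemmas

lemma nfst {x : Node} {a b : ℤ} : (x + (a, b)).1 = x.1 + a := rfl
lemma nsnd {x : Node} {a b : ℤ} : (x + (a, b)).2 = x.2 + b := rfl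

lemma adj_symm' {a b : Node} (h : Adj a b) : Adj b a := by
  rcases h with h | h | h | h <;> subst h <;> unfold Adj <;>
    simp only [Prod.ext_iff, nfst, nsnd] <;> omega

lemma se_mono {z : ℕ → Node} {k : ℕ} (h : IsSEPath z k) :
    ∀ d i, i + d < k → SE (z i) (z (i + d)) := by
  intro d
  induction d with
  | zero => exact fun i _ => ⟨le_rfl, le_rfl⟩
  | succ d ih =>
    intro i hi
    obtain ⟨ha, hb⟩ := ih i (by omega)
    have h2 := h (i + d) (by omega)
    have he : i + (d + 1) = (i + d) + 1 := rfl
    rw [he]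
    rcases h2 with h2 | h2 <;> rw [h2] <;>
      exact ⟨by rw [nfst]; omega, by rw [nsnd]; omega⟩

lemma pathIn_of_steps {τ : Finset Node} {z : ℕ → Node} {k : ℕ}
    (hadj : ∀ i, i + 1 < k → Adj (z i) (z (i + 1)))
    (hmem : ∀ i < k, z i ∈ τ) (hk : 1 ≤ k) : PathIn τ (z 0) (z (k - 1)) := by
  have key : ∀ m, m < k → PathIn τ (z 0) (z m) := by
    intro m
    induction m with
    | zero => exact fun _ => Relation.ReflTransGen.refl
    | succ m ih =>
      intro hm
      exact (ih (by omega)).tail ⟨hmem m (by omega), hmem (m + 1) hm, hadj m hm⟩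
  exact key (k - 1) (by omega)

lemma pathIn_symm {τ : Finset Node} {u v : Node} (h : PathIn τ u v) : PathIn τ v u := by
  refine (@Relation.ReflTransGen.symmetric _ _ ⟨?_⟩).symm _ _ h
  intro a b hab
  exact ⟨hab.2.1, hab.1, adj_symm' hab.2.2⟩

lemma crossing {τ : Finset Node} (B : Node → Prop) {u x : Node}
    (hp : PathIn τ u x) (hBu : ¬ B u) (hBx : B x) :
    ∃ w w', w ∈ τ ∧ w' ∈ τ ∧ Adj w w' ∧ ¬ B w ∧ B w' := by
  revert hBx
  induction hp with
  | refl => exact fun h => absurd h hBu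
  | @tail b c h step ih =>
    intro hBc
    by_cases hB : B b
    · exact ih hB
    · exact ⟨b, c, step.1, step.2.1, step.2.2, hB, hBc⟩

lemma step_lemma {τ : Finset Node} (hsk : IsSkew τ) (hconn : IsConnectedShape τ)
    {u v : Node} (hu : u ∈ τ) (hv : v ∈ τ) (huv : NEr u v) (hne : u ≠ v) :
    ∃ u', u' ∈ τ ∧ (u' = u + (-1, 0) ∨ u' = u + (0, 1)) ∧ NEr u' v := by
  obtain ⟨h1, h2⟩ := huv
  by_cases hcol : v.1 = u.1
  · have hlt : u.2 < v.2 := by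
      rcases lt_or_eq_of_le h2 with h | h
      · exact h
      · exact absurd (Prod.ext hcol.symm h) hne
    have hb : u + (0, 1) ∈ τ := by
      apply hsk u hu v hv
      · exact ⟨by rw [nfst]; omega, by rw [nsnd]; omega⟩
      · exact ⟨by rw [nfst]; omega, by rw [nsnd]; omega⟩
    exact ⟨u + (0, 1), hb, Or.inr rfl,
      ⟨by rw [nfst]; omega, by rw [nsnd]; omega⟩⟩
  · have hcol' : v.1 < u.1 := lt_of_le_of_ne h1 hcol
    by_cases hrow : u.2 = v.2
    · have ha : u + (-1, 0) ∈ τ := by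
        apply hsk v hv u hu
        · exact ⟨by rw [nfst]; omega, by rw [nsnd]; omega⟩
        · exact ⟨by rw [nfst]; omega, by rw [nsnd]; omega⟩
      exact ⟨u + (-1, 0), ha, Or.inl rfl,
        ⟨by rw [nfst]; omega, by rw [nsnd]; omega⟩⟩
    · have hrow' : u.2 < v.2 := lt_of_le_of_ne h2 hrow
      by_cases ha : u + (-1, 0) ∈ τ
      · exact ⟨u + (-1, 0), ha, Or.inl rfl,
          ⟨by rw [nfst]; omega, by rw [nsnd]; omega⟩⟩
      by_cases hb : u + (0, 1) ∈ τ
      · exact ⟨u + (0, 1), hb, Or.inr rfl,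
          ⟨by rw [nfst]; omega, by rw [nsnd]; omega⟩⟩
      exfalso
      obtain ⟨w, w', hw, hw', hadj, hBw, hBw'⟩ :=
        crossing (fun w => w.1 < u.1 ∧ u.2 < w.2) (hconn u hu v hv)
          (by omega) ⟨hcol', hrow'⟩
      simp only [not_and, not_lt] at hBw
      obtain ⟨c1, c2⟩ := hBw'
      rcases hadj with h | h | h | h <;> rw [h, nfst] at c1 <;> rw [h, nsnd] at c2
      · have := hBw (by omega)
        omega
      · apply hb
        have hw1 : w.1 = u.1 := by
          by_cases hlt : w.1 < u.1
          · exact absurd c2 (not_lt.2 (by have := hBw hlt; omega))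
          · omega
        apply hsk u hu w hw
        · exact ⟨by rw [nfst]; omega, by rw [nsnd]; omega⟩
        · exact ⟨by rw [nfst]; omega, by rw [nsnd]; omega⟩
      · apply ha
        have hw2 : w.2 = u.2 := by
          have := hBw (by omega)
          omega
        apply hsk w hw u hu
        · exact ⟨by rw [nfst]; omega, by rw [nsnd]; omega⟩
        · exact ⟨by rw [nfst]; omega, by rw [nsnd]; omega⟩
      · have := hBw (by omega)
        omega

lemma stair_spec {u p w : Node} (h1 : SE u p) (h2 : SE p w) :
    ∃ (z : ℕ → Node) (k : ℕ), 1 ≤ k ∧ IsSEPath z k ∧ z 0 = u ∧ z (k - 1) = w ∧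
      ∃ j < k, z j = p := by
  obtain ⟨h11, h12⟩ := h1
  obtain ⟨h21, h22⟩ := h2
  obtain ⟨A, hA⟩ : ∃ A : ℕ, (A : ℤ) = p.1 - u.1 :=
    ⟨(p.1 - u.1).toNat, Int.toNat_of_nonneg (by omega)⟩
  obtain ⟨B, hB⟩ : ∃ B : ℕ, (B : ℤ) = w.2 - u.2 :=
    ⟨(w.2 - u.2).toNat, Int.toNat_of_nonneg (by omega)⟩
  obtain ⟨C, hC⟩ : ∃ C : ℕ, (C : ℤ) = w.1 - p.1 :=
    ⟨(w.1 - p.1).toNat, Int.toNat_of_nonneg (by omega)⟩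
  obtain ⟨E, hE⟩ : ∃ E : ℕ, (E : ℤ) = p.2 - u.2 :=
    ⟨(p.2 - u.2).toNat, Int.toNat_of_nonneg (by omega)⟩
  refine ⟨fun i =>
    if i ≤ A then (u.1 + i, u.2)
    else if i ≤ A + B then (p.1, u.2 + ((i - A : ℕ) : ℤ))
    else (p.1 + ((i - A - B : ℕ) : ℤ), w.2), A + B + C + 1, by omega, ?_, ?_, ?_, ?_⟩
  · intro i hi
    beta_reduce
    by_cases hc1 : i + 1 ≤ A
    · left
      rw [if_pos hc1, if_pos (by omega)]
      simp only [Prod.ext_iff, nfst, nsnd]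
      constructor <;> (try push_cast) <;> omega
    · by_cases hc2 : i + 1 ≤ A + B
      · right
        rw [if_neg hc1, if_pos hc2]
        by_cases hc3 : i ≤ A
        · rw [if_pos hc3]
          simp only [Prod.ext_iff, nfst, nsnd]
          constructor <;> (try push_cast) <;> omega
        · rw [if_neg hc3, if_pos (by omega)]
          simp only [Prod.ext_iff, nfst, nsnd]
          constructor <;> (try push_cast) <;> omega
      · left
        rw [if_neg hc1, if_neg hc2]
        by_cases hc3 : i ≤ A
        · rw [if_pos hc3]
          simp only [Prod.ext_iff, nfst, nsnd]
          constructor <;> (try push_cast) <;> omega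
        · by_cases hc4 : i ≤ A + B
          · rw [if_neg hc3, if_pos hc4]
            simp only [Prod.ext_iff, nfst, nsnd]
            constructor <;> (try push_cast) <;> omega
          · rw [if_neg hc3, if_neg hc4]
            simp only [Prod.ext_iff, nfst, nsnd]
            constructor <;> (try push_cast) <;> omega
  · beta_reduce
    rw [if_pos (by omega)]
    simp [Prod.ext_iff]
  · beta_reduce
    rw [show A + B + C + 1 - 1 = A + B + C from rfl]
    by_cases hc1 : A + B + C ≤ A
    · rw [if_pos hc1]
      simp only [Prod.ext_iff]
      constructor <;> (try push_cast) <;> omega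
    · by_cases hc2 : A + B + C ≤ A + B
      · rw [if_neg hc1, if_pos hc2]
        simp only [Prod.ext_iff]
        constructor <;> (try push_cast) <;> omega
      · rw [if_neg hc1, if_neg hc2]
        simp only [Prod.ext_iff]
        constructor <;> (try push_cast) <;> omega
  · refine ⟨A + E, by omega, ?_⟩
    beta_reduce
    by_cases hc1 : A + E ≤ A
    · rw [if_pos hc1]
      simp only [Prod.ext_iff]
      constructor <;> (try push_cast) <;> omega
    · rw [if_neg hc1, if_pos (by omega)]
      simp only [Prod.ext_iff]
      constructor <;> (try push_cast) <;> omega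

lemma ne_path_exists {τ : Finset Node} (hsk : IsSkew τ) (hconn : IsConnectedShape τ) :
    ∀ n : ℕ, ∀ u ∈ τ, ∀ v ∈ τ, NEr u v → ((u.1 - v.1) + (v.2 - u.2)).toNat = n →
    ∃ (z : ℕ → Node) (k : ℕ), 1 ≤ k ∧ IsNEPath z k ∧ z 0 = u ∧
      z (k - 1) = v ∧ ∀ i < k, z i ∈ τ := by
  intro n
  induction n using Nat.strong_induction_on with
  | _ n ih =>
    intro u hu v hv huv hmeas
    by_cases hne : u = v
    · subst hne
      exact ⟨fun _ => u, 1, le_rfl, by intro i hi; omega, rfl, rfl,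
        fun i hi => by simpa [show i = 0 by omega] using hu⟩
    · obtain ⟨u', hu', hstep, hNEr⟩ := step_lemma hsk hconn hu hv huv hne
      have hmeas' : ((u'.1 - v.1) + (v.2 - u'.2)).toNat < n := by
        obtain ⟨a1, a2⟩ := huv
        obtain ⟨b1, b2⟩ := hNEr
        rcases hstep with h | h <;> rw [h, nfst] at b1 ⊢ <;> rw [h, nsnd] at b2 <;>
          first
          | (rw [nsnd]; omega)
          | omega
      obtain ⟨z', k', hk', hpath', hz0', hzk', hmem'⟩ :=
        ih _ hmeas' u' hu' v hv hNEr rfl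
      refine ⟨fun i => if i = 0 then u else z' (i - 1), k' + 1, by omega, ?_, by simp, ?_, ?_⟩
      · intro i hi
        beta_reduce
        by_cases h0 : i = 0
        · subst h0
          simp only [if_neg (by omega : (1 : ℕ) ≠ 0), if_pos rfl]
          rw [show (1 : ℕ) - 1 = 0 from rfl, hz0']
          exact hstep
        · have h' := hpath' (i - 1) (by omega)
          rw [show i - 1 + 1 = i by omega] at h'
          simpa only [if_neg (by omega : i + 1 ≠ 0), if_neg h0, Nat.add_sub_cancel] using h'
      · beta_reduce
        simp only [Nat.add_sub_cancel, if_neg (by omega : k' ≠ 0)]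
        exact hzk'
      · intro i hi
        beta_reduce
        by_cases h0 : i = 0
        · simpa [h0] using hu
        · simp only [if_neg h0]
          exact hmem' (i - 1) (by omega)

end AuxLemmas
theorem stmt2 (τ : Finset Node) :
    (IsSkew τ ∧ IsConnectedShape τ) ↔
      ((∀ u ∈ τ, ∀ v ∈ τ, SE u v →
          ∀ (z : ℕ → Node) (k : ℕ), 1 ≤ k → IsSEPath z k → z 0 = u →
            z (k - 1) = v → ∀ i < k, z i ∈ τ) ∧
       (∀ u ∈ τ, ∀ v ∈ τ, NEr u v →
          ∃ (z : ℕ → Node) (k : ℕ), 1 ≤ k ∧ IsNEPath z k ∧ z 0 = u ∧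
            z (k - 1) = v ∧ ∀ i < k, z i ∈ τ)) := by
  constructor
  · rintro ⟨hsk, hconn⟩
    constructor
    · intro u hu v hv huv z k hk hpath hz0 hzk i hik
      have h1 : SE u (z i) := by
        have := se_mono hpath i 0 (by omega)
        simpa [hz0] using this
      have h2 : SE (z i) (z (k - 1)) := by
        have := se_mono hpath (k - 1 - i) i (by omega)
        rwa [show i + (k - 1 - i) = k - 1 by omega] at this
      rw [hzk] at h2
      exact hsk u hu v hv (z i) h1 h2
    · intro u hu v hv huv
      exact ne_path_exists hsk hconn _ u hu v hv huv rfl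
  · rintro ⟨hSE, hNE⟩
    have hskew : IsSkew τ := by
      intro u hu w hw v h1 h2
      obtain ⟨z, k, hk, hpath, hz0, hzk, j, hj, hzj⟩ := stair_spec h1 h2
      have := hSE u hu w hw ⟨le_trans h1.1 h2.1, le_trans h1.2 h2.2⟩ z k hk hpath hz0 hzk j hj
      rwa [hzj] at this
    refine ⟨hskew, ?_⟩
    have hhalf : ∀ u ∈ τ, ∀ v ∈ τ, (SE u v ∨ NEr u v) → PathIn τ u v := by
      intro u hu v hv hcase
      rcases hcase with hse | hne
      · obtain ⟨z, k, hk, hpath, hz0, hzk, _⟩ := stair_spec hse ⟨le_rfl, le_rfl⟩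
        have hmem : ∀ i < k, z i ∈ τ := hSE u hu v hv hse z k hk hpath hz0 hzk
        have hadj : ∀ i, i + 1 < k → Adj (z i) (z (i + 1)) := by
          intro i hi
          rcases hpath i hi with h | h
          · exact Or.inl h
          · exact Or.inr (Or.inr (Or.inl h))
        have := pathIn_of_steps hadj hmem hk
        rwa [hz0, hzk] at this
      · obtain ⟨z, k, hk, hpath, hz0, hzk, hmem⟩ := hNE u hu v hv hne
        have hadj : ∀ i, i + 1 < k → Adj (z i) (z (i + 1)) := by
          intro i hi
          rcases hpath i hi with h | h
          · exact Or.inr (Or.inl h)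
          · exact Or.inr (Or.inr (Or.inl h))
        have := pathIn_of_steps hadj hmem hk
        rwa [hz0, hzk] at this
    intro u hu v hv
    rcases le_or_gt u.1 v.1 with h1 | h1 <;> rcases le_or_gt u.2 v.2 with h2 | h2
    · exact hhalf u hu v hv (Or.inl ⟨h1, h2⟩)
    · exact pathIn_symm (hhalf v hv u hu (Or.inr ⟨h1, le_of_lt h2⟩))
    · exact hhalf u hu v hv (Or.inr ⟨le_of_lt h1, h2⟩)
    · exact pathIn_symm (hhalf v hv u hu (Or.inl ⟨le_of_lt h1, le_of_lt h2⟩))
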